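/- Let α ∈ (0, 1/2), D ≥ 1 an integer, and suppose x ∈ (0,1) satisfies D + 1/(1−x) + (D+1)/(x^{D+1} − 1) = Dα. Then α/(1−α) ≤ x ≤ (α/(1−α))·(1 + (1−α)D)/(1 + αD). -/

import Mathlib

theorem stmt_19 (D : ℕ) (hD : 1 ≤ D) (α : ℝ) (hα : 0 < α) (hα2 : α < 1 / 2)
    (x : ℝ) (hx : x ∈ Set.Ioo (0 : ℝ) 1)
    (heq : (D : ℝ) + 1 / (1 - x) + (D + 1) / (x ^ (D + 1) - 1) = D * α) :
    α / (1 - α) ≤ x ∧ x ≤ α / (1 - α) * ((1 + (1 - α) * D) / (1 + α * D)) := by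
  obtain ⟨hx0, hx1⟩ := hx
  have hu : (0:ℝ) < 1 - x := by linarith
  have hy1 : x ^ (D+1) < 1 := pow_lt_one₀ hx0.le hx1 (by omega)
  have hy0 : (0:ℝ) < x ^ (D+1) := pow_pos hx0 _
  have hB : (0:ℝ) < 1 - x ^ (D+1) := by linarith
  have hD0 : (0:ℝ) < D := by exact_mod_cast Nat.lt_of_lt_of_le Nat.zero_lt_one hD
  have h1α : (0:ℝ) < 1 - α := by linarith
  -- the cleared-denominator form of heq
  have hA : (D:ℝ) * α * (1 - x) * (1 - x^(D+1))
      = x - ((D:ℝ)+1)*x^(D+1) + D*x^(D+1)*x := by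
    have h1 : (1:ℝ) - x ≠ 0 := ne_of_gt hu
    have h2 : x^(D+1) - 1 ≠ 0 := by intro h; nlinarith
    field_simp at heq
    linear_combination heq
  set S := ∑ i ∈ Finset.range (D+1), x ^ i with hSdef
  have hS : S * (x - 1) = x ^ (D+1) - 1 := geom_sum_mul x (D+1)
  have hSpos : 0 < S := by
    apply Finset.sum_pos (fun i _ => pow_pos hx0 i)
    exact ⟨0, Finset.mem_range.mpr (by omega)⟩
  -- key inequality 1
  have key1 : 2 * S ≤ ((D:ℝ)+1) * (1 + x^D) := by
    have hrefl : ∑ i ∈ Finset.range (D+1), x ^ (D - i) = S := by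
      have := Finset.sum_range_reflect (fun i => x ^ i) (D+1)
      simpa using this
    have h1 : ∀ i ∈ Finset.range (D+1), x^i + x^(D-i) ≤ 1 + x^D := by
      intro i hi
      have hiD : i ≤ D := by simp at hi; omega
      have hprod : x^i * x^(D-i) = x^D := by rw [← pow_add]; congr 1; omega
      have hxi : x^i ≤ 1 := pow_le_one₀ hx0.le hx1.le
      have hxdi : x^(D-i) ≤ 1 := pow_le_one₀ hx0.le hx1.le
      nlinarith [pow_pos hx0 i, pow_pos hx0 (D-i)]
    calc 2 * S = ∑ i ∈ Finset.range (D+1), (x^i + x^(D-i)) := by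
          rw [Finset.sum_add_distrib, hrefl, hSdef]; ring
      _ ≤ ∑ i ∈ Finset.range (D+1), (1 + x^D) := Finset.sum_le_sum h1
      _ = ((D:ℝ)+1) * (1 + x^D) := by
          rw [Finset.sum_const, Finset.card_range]; push_cast; ring
  -- key inequality 2 (Cauchy-Schwarz / AM-GM)
  have key2 : ((D:ℝ)+1)^2 * x^D ≤ S^2 := by
    set t := Real.sqrt x with ht
    have ht0 : 0 < t := Real.sqrt_pos.mpr hx0
    have ht2 : t^2 = x := Real.sq_sqrt hx0.le
    have hSx : S = ∑ i ∈ Finset.range (D+1), (t^i)^2 := by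
      apply Finset.sum_congr rfl
      intro i _
      rw [← pow_mul, mul_comm i 2, pow_mul, ht2]
    have hrefl : ∑ i ∈ Finset.range (D+1), (t ^ (D - i))^2
        = ∑ i ∈ Finset.range (D+1), (t ^ i)^2 := by
      have := Finset.sum_range_reflect (fun i => (t ^ i)^2) (D+1)
      simpa using this
    have key : ((D:ℝ)+1) * t^D ≤ ∑ i ∈ Finset.range (D+1), (t^i)^2 := by
      have h1 : ∀ i ∈ Finset.range (D+1), 2 * t^D ≤ (t^i)^2 + (t^(D-i))^2 := by
        intro i hi
        have hiD : i ≤ D := by simp at hi; omega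
        have hprod : t^i * t^(D-i) = t^D := by rw [← pow_add]; congr 1; omega
        nlinarith [sq_nonneg (t^i - t^(D-i))]
      have h2 := Finset.sum_le_sum h1
      rw [Finset.sum_add_distrib, hrefl, Finset.sum_const, Finset.card_range] at h2
      simp only [nsmul_eq_mul] at h2
      push_cast at h2
      linarith
    have hS0 : (0:ℝ) ≤ ((D:ℝ)+1) * t^D := by positivity
    calc ((D:ℝ)+1)^2 * x^D = (((D:ℝ)+1) * t^D)^2 := by
          rw [← ht2, ← pow_mul, mul_comm 2 D, pow_mul]; ring
      _ ≤ (∑ i ∈ Finset.range (D+1), (t^i)^2)^2 := pow_le_pow_left₀ hS0 key 2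
      _ = S^2 := by rw [← hSx]
  clear_value S
  constructor
  · -- lower bound
    have hid : (D:ℝ)*x*((1-x)*(1-x^(D+1))) - (1+x)*(x - ((D:ℝ)+1)*x^(D+1) + D*x^(D+1)*x)
        = x*(1-x)*(((D:ℝ)+1)*(1+x^D) - 2*S) := by
      linear_combination (-2*x) * hS
    have h8 : 0 ≤ x*(1-x)*(((D:ℝ)+1)*(1+x^D) - 2*S) := by
      apply mul_nonneg (mul_nonneg hx0.le hu.le)
      linarith
    have h7 : (D:ℝ)*α*(1+x)*((1-x)*(1-x^(D+1))) ≤ (D:ℝ)*x*((1-x)*(1-x^(D+1))) := by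
      have e1 : (D:ℝ)*α*(1+x)*((1-x)*(1-x^(D+1)))
          = (1+x)*(x - ((D:ℝ)+1)*x^(D+1) + D*x^(D+1)*x) := by
        linear_combination (1+x)*hA
      rw [e1]; linarith [hid, h8]
    have h6 : (D:ℝ)*α*(1+x) ≤ (D:ℝ)*x :=
      le_of_mul_le_mul_right h7 (mul_pos hu hB)
    have h9 : α*(1+x) ≤ x := by
      have h10 : (D:ℝ)*(α*(1+x)) ≤ (D:ℝ)*x := by linarith [h6]
      exact (mul_le_mul_iff_of_pos_left hD0).mp h10
    rw [div_le_iff₀ h1α]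
    linarith [h9]
  · -- upper bound
    have hαD : (0:ℝ) < 1 + α * D := by positivity
    rw [div_mul_div_comm, le_div_iff₀ (by positivity)]
    have hP : (α*(1+(1-α)*(D:ℝ)) - x*((1-α)*(1+α*(D:ℝ))))
          * ((D:ℝ)*(1-x)^2*(1-x^(D+1))^2)
        = x*(1-x)^3*(S^2 - ((D:ℝ)+1)^2*x^D) := by
      linear_combination ((1-x)*(1-x^(D+1))*((D:ℝ)+1-x*((D:ℝ)-1))
          - (1-x)*(x - ((D:ℝ)+1)*x^(D+1) + D*x^(D+1)*x)
          - (D:ℝ)*(1-x)^2*(1-x^(D+1))*α) * hA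
        + ((1-x)*x*((1-x^(D+1))+(1-x)*S)) * hS
    have hQ : 0 ≤ x*(1-x)^3*(S^2 - ((D:ℝ)+1)^2*x^D) :=
      mul_nonneg (mul_nonneg hx0.le (pow_nonneg hu.le 3)) (by linarith)
    have hF : 0 ≤ α*(1+(1-α)*(D:ℝ)) - x*((1-α)*(1+α*(D:ℝ))) := by
      have hpos : (0:ℝ) < (D:ℝ)*(1-x)^2*(1-x^(D+1))^2 := by positivity
      have hQ' : 0 * ((D:ℝ)*(1-x)^2*(1-x^(D+1))^2)
          ≤ (α*(1+(1-α)*(D:ℝ)) - x*((1-α)*(1+α*(D:ℝ))))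
            * ((D:ℝ)*(1-x)^2*(1-x^(D+1))^2) := by
        rw [hP, zero_mul]; exact hQ
      exact le_of_mul_le_mul_right hQ' hpos
    linarith [hF]
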